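/- arXiv:1509.07397 — 3 statements merged into one kernel-verified Lean document; each statement's English description precedes it below -/
import Mathlib

section
/- Let n, Δ, d be positive integers and let H : ℕ → ℕ be a function satisfying, for all m ≥ 1, both H(m) ≤ Δ·C(m+n, n) and H(m) ≥ C(m+n+1, n+1) - C(m-Δ+n+1, n+1). Then for every ε > 0 there exists a constant a_ε (depending only on ε, n, Δ, d) such that for all m ∈ ℕ with m ≥ a_ε and d | m, one has m·(H(m)+1) ≤ d·(n+1+ε)·∑_{i=1}^{m/d - 1} H(i·d). -/
open Finset

private lemma choose_add_le (a k n : ℕ) :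
    (a + n + 1).choose (n + 1) + k * ((a + n + 1).choose n) ≤ (a + k + n + 1).choose (n + 1) := by
  induction k with
  | zero => simp
  | succ k ih =>
    have h1 : a + (k + 1) + n + 1 = (a + k + n + 1) + 1 := by ring
    calc (a + n + 1).choose (n + 1) + (k + 1) * ((a + n + 1).choose n)
        = ((a + n + 1).choose (n + 1) + k * ((a + n + 1).choose n)) + (a + n + 1).choose n := by
          ring
      _ ≤ (a + k + n + 1).choose (n + 1) + (a + k + n + 1).choose n :=
          Nat.add_le_add ih (Nat.choose_le_choose n (by omega))
      _ = (a + (k + 1) + n + 1).choose (n + 1) := by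
          rw [h1, Nat.choose_succ_succ' (a + k + n + 1) n]
          exact (Nat.add_comm _ _)

private lemma mvt_pow (x y : ℝ) (k : ℕ) (hy : 0 ≤ y) (hxy : y ≤ x) :
    x ^ k - y ^ k ≤ k * (x - y) * x ^ (k - 1) := by
  have hx : 0 ≤ x := hy.trans hxy
  rw [← geom_sum₂_mul x y k]
  have hb : ∑ i ∈ range k, x ^ i * y ^ (k - 1 - i) ≤ k * x ^ (k - 1) := by
    calc ∑ i ∈ range k, x ^ i * y ^ (k - 1 - i)
        ≤ ∑ _i ∈ range k, x ^ (k - 1) := by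
          apply Finset.sum_le_sum
          intro i hi
          have hik : i < k := Finset.mem_range.mp hi
          calc x ^ i * y ^ (k - 1 - i) ≤ x ^ i * x ^ (k - 1 - i) :=
                mul_le_mul_of_nonneg_left (pow_le_pow_left₀ hy hxy _) (pow_nonneg hx i)
            _ = x ^ (k - 1) := by rw [← pow_add]; congr 1; omega
      _ = k * x ^ (k - 1) := by
          rw [Finset.sum_const, Finset.card_range, nsmul_eq_mul]
  calc (∑ i ∈ range k, x ^ i * y ^ (k - 1 - i)) * (x - y)
      ≤ (k * x ^ (k - 1)) * (x - y) :=
        mul_le_mul_of_nonneg_right hb (by linarith)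
    _ = k * (x - y) * x ^ (k - 1) := by ring

private lemma poly_eventually (k : ℕ) (hk : 2 ≤ k) (A B D e c : ℝ)
    (hA : 0 < A) (hAD : A < D) (hB : 0 ≤ B) (he : 0 ≤ e) (hc : 0 ≤ c) :
    ∃ a : ℝ, ∀ x : ℝ, a ≤ x → A * (x + e) ^ k + B * x ≤ D * (x - c) ^ k := by
  set A' : ℝ := (A + D) / 2 with hA'def
  have hAA' : A < A' := by rw [hA'def]; linarith
  have hA'D : A' < D := by rw [hA'def]; linarith
  have hA'pos : 0 < A' := lt_trans hA hAA'
  have hratio : 1 < A' / A := (one_lt_div hA).mpr hAA'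
  have hratio0 : 0 ≤ A' / A := by positivity
  set r : ℝ := (A' / A) ^ ((k : ℝ)⁻¹) with hrdef
  have hkpos : (0 : ℝ) < (k : ℝ)⁻¹ := by
    have : (0 : ℝ) < (k : ℝ) := by exact_mod_cast (by omega : 0 < k)
    positivity
  have hr1 : 1 < r := by
    rw [hrdef]
    exact (Real.one_lt_rpow_iff_of_pos (by positivity)).mpr (Or.inl ⟨hratio, hkpos⟩)
  have hrk : r ^ k = A' / A := by
    rw [hrdef]
    exact Real.rpow_inv_natCast_pow hratio0 (by omega)
  have hDA' : 0 < D - A' := by linarith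
  refine ⟨max ((e + r * c) / (r - 1)) (max (2 * c + 2) (4 * B / (D - A'))), fun x hx => ?_⟩
  have hx1 : (e + r * c) / (r - 1) ≤ x := le_trans (le_max_left _ _) hx
  have hx2 : 2 * c + 2 ≤ x := le_trans (le_trans (le_max_left _ _) (le_max_right _ _)) hx
  have hx3 : 4 * B / (D - A') ≤ x := le_trans (le_trans (le_max_right _ _) (le_max_right _ _)) hx
  have hr1' : 0 < r - 1 := by linarith
  have hxe : x + e ≤ r * (x - c) := by
    have := (div_le_iff₀ hr1').mp hx1
    nlinarith
  have hx0 : 0 ≤ x := by linarith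
  have hxe0 : 0 ≤ x + e := by linarith
  have hxc1 : 1 ≤ x - c := by linarith
  have hxc0 : 0 ≤ x - c := by linarith
  -- Step 1
  have step1 : A * (x + e) ^ k ≤ A' * (x - c) ^ k := by
    calc A * (x + e) ^ k ≤ A * (r * (x - c)) ^ k := by
          exact mul_le_mul_of_nonneg_left (pow_le_pow_left₀ hxe0 hxe k) hA.le
      _ = A * (r ^ k * (x - c) ^ k) := by rw [mul_pow]
      _ = A' * (x - c) ^ k := by rw [hrk]; field_simp
  -- Step 2
  have step2 : B * x ≤ (D - A') * (x - c) ^ k := by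
    have h2k : (x - c) ^ 2 ≤ (x - c) ^ k := pow_le_pow_right₀ hxc1 hk
    have hhalf : x / 2 ≤ x - c := by linarith
    have h4B : 4 * B ≤ x * (D - A') := (div_le_iff₀ hDA').mp hx3
    have hsq : B * x ≤ (D - A') * (x - c) ^ 2 := by
      nlinarith [mul_le_mul_of_nonneg_left (mul_le_mul hhalf hhalf (by linarith) hxc0) hDA'.le,
        mul_le_mul_of_nonneg_right h4B hx0]
    calc B * x ≤ (D - A') * (x - c) ^ 2 := hsq
      _ ≤ (D - A') * (x - c) ^ k := mul_le_mul_of_nonneg_left h2k hDA'.le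
  calc A * (x + e) ^ k + B * x ≤ A' * (x - c) ^ k + (D - A') * (x - c) ^ k := by
        linarith
    _ = D * (x - c) ^ k := by ring

/-- Abstract form of Proposition 2.3: if `H : ℕ → ℕ` satisfies Chardin's upper bound
`H(m) ≤ Δ·C(m+n,n)` and the Nesterenko–Sombra lower bound
`H(m) ≥ C(m+n+1,n+1) - C(m-Δ+n+1,n+1)` (the latter binomial interpreted as `0`
when `m < Δ`), then for every `ε > 0` there is `a_ε` such that for all multiples
`m` of `d` with `m ≥ a_ε` one has
`m·(H(m)+1) ≤ d·(n+1+ε)·∑_{i=1}^{m/d-1} H(i·d)`. -/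
theorem hilbert_ratio_bound (n Δ d : ℕ) (hn : 0 < n) (hΔ : 0 < Δ) (hd : 0 < d)
    (H : ℕ → ℕ)
    (hupper : ∀ m : ℕ, 1 ≤ m → (H m : ℝ) ≤ Δ * (m + n).choose n)
    (hlower : ∀ m : ℕ, 1 ≤ m →
      ((m + n + 1).choose (n + 1) : ℝ) -
          (if Δ ≤ m then ((m - Δ + n + 1).choose (n + 1) : ℝ) else 0) ≤ H m) :
    ∀ ε : ℝ, 0 < ε → ∃ a : ℕ, ∀ m : ℕ, a ≤ m → d ∣ m →
      (m : ℝ) * (H m + 1) ≤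
        d * ((n : ℝ) + 1 + ε) * ∑ i ∈ Finset.Icc 1 (m / d - 1), (H (i * d) : ℝ) := by
  intro ε hε
  set F : ℝ := (n.factorial : ℝ) with hFdef
  have hF : 0 < F := by rw [hFdef]; exact_mod_cast n.factorial_pos
  have hΔR : (0 : ℝ) < Δ := by exact_mod_cast hΔ
  have hdR : (0 : ℝ) < d := by exact_mod_cast hd
  have hnR : (0 : ℝ) ≤ n := Nat.cast_nonneg n
  obtain ⟨a₀, ha₀⟩ := poly_eventually (n + 1) (by omega)
    ((Δ : ℝ) * ((n : ℝ) + 1)) (((n : ℝ) + 1) * F) ((Δ : ℝ) * ((n : ℝ) + 1 + ε))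
    (n : ℝ) ((Δ : ℝ) * d)
    (by positivity) (by nlinarith) (by positivity) hnR (by positivity)
  obtain ⟨N, hN⟩ := exists_nat_ge a₀
  refine ⟨max N (d * (Δ + 1)), fun m hm hdvd => ?_⟩
  have hmN : a₀ ≤ (m : ℝ) := by
    refine hN.trans ?_
    exact_mod_cast le_trans (le_max_left _ _) hm
  have hmd : d * (Δ + 1) ≤ m := le_trans (le_max_right _ _) hm
  have h1m : 1 ≤ m := le_trans (by nlinarith) hmd
  set M := m / d with hMdef
  have hMd : M * d = m := Nat.div_mul_cancel hdvd
  have hMΔ : Δ + 1 ≤ M := by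
    rw [hMdef, Nat.le_div_iff_mul_le hd]
    calc (Δ + 1) * d = d * (Δ + 1) := Nat.mul_comm _ _
      _ ≤ m := hmd
  set g : ℕ → ℝ := fun j => ((j : ℝ) * d) ^ (n + 1) with hgdef
  set S : ℝ := ∑ i ∈ Finset.Icc 1 (M - 1), (H (i * d) : ℝ) with hSdef
  -- sum bounds
  have hIcc : Finset.Icc 1 (M - 1) = Finset.Ico 1 M := by
    rw [← Finset.Ico_add_one_right_eq_Icc]
    congr 1
    omega
  have hsum1 : ∑ i ∈ Finset.Ico Δ M, (H (i * d) : ℝ) ≤ S := by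
    rw [hSdef, hIcc]
    exact Finset.sum_le_sum_of_subset_of_nonneg (Finset.Ico_subset_Ico hΔ le_rfl)
      (fun i _ _ => by positivity)
  have hsum2 : ∑ i ∈ Finset.Ico Δ M, (H (i * d) : ℝ)
      = ∑ j ∈ Finset.range (M - Δ), (H ((Δ + j) * d) : ℝ) :=
    Finset.sum_Ico_eq_sum_range (fun i => (H (i * d) : ℝ)) Δ M
  -- key per-term bound
  have hkey : ∀ j ∈ Finset.range (M - Δ),
      (Δ : ℝ) * (g (j + 1) - g j) ≤ (d : ℝ) * ((n : ℝ) + 1) * F * (H ((Δ + j) * d) : ℝ) := by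
    intro j _
    set m' := (Δ + j) * d with hm'def
    have hm'eq : m' = Δ * d + j * d := by rw [hm'def, Nat.add_mul]
    have hΔd : Δ ≤ Δ * d := by
      calc Δ = Δ * 1 := (Nat.mul_one Δ).symm
        _ ≤ Δ * d := Nat.mul_le_mul_left Δ hd
    have hm'Δ : Δ ≤ m' := by
      rw [hm'eq]; exact le_trans hΔd (Nat.le_add_right _ _)
    obtain ⟨b, hb⟩ : ∃ b, m' = b + Δ := ⟨m' - Δ, (Nat.sub_add_cancel hm'Δ).symm⟩
    have h5 : Δ + d ≤ Δ * d + 1 := by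
      obtain ⟨Δ', rfl⟩ := Nat.exists_eq_add_of_le hΔ
      obtain ⟨d', rfl⟩ := Nat.exists_eq_add_of_le hd
      have hx : (1 + Δ') * (1 + d') = 1 + Δ' + d' + Δ' * d' := by ring
      rw [hx]
      linarith [Nat.zero_le (Δ' * d')]
    have hjd : (j + 1) * d ≤ b + 2 := by
      have hsm : (j + 1) * d = j * d + d := by ring
      rw [hsm]
      linarith [hm'eq, hb, h5]
    -- lower bound for H m'
    have hlow := hlower m' (le_trans hΔ hm'Δ)
    rw [if_pos hm'Δ, show m' - Δ + n + 1 = b + n + 1 from by omega] at hlow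
    have hBC := choose_add_le b Δ n
    rw [show b + Δ + n + 1 = m' + n + 1 from by omega] at hBC
    have hBCR : ((b + n + 1).choose (n + 1) : ℝ) + (Δ : ℝ) * ((b + n + 1).choose n)
        ≤ ((m' + n + 1).choose (n + 1) : ℝ) := by exact_mod_cast hBC
    have hmain : (Δ : ℝ) * ((b + n + 1).choose n : ℝ) ≤ (H m' : ℝ) := by linarith
    -- binomial lower bound by power
    have hpc : ((b : ℝ) + 2) ^ n / F ≤ ((b + n + 1).choose n : ℝ) := by
      have h := Nat.pow_le_choose n (b + n + 1) (α := ℝ)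
      rw [show b + n + 1 + 1 - n = b + 2 from by omega] at h
      rw [hFdef]
      push_cast at h ⊢
      exact h
    have h7 : ((b : ℝ) + 2) ^ n ≤ ((b + n + 1).choose n : ℝ) * F :=
      (div_le_iff₀ hF).mp hpc
    have hxb : ((j : ℝ) + 1) * (d : ℝ) ≤ (b : ℝ) + 2 := by exact_mod_cast hjd
    have hx_nonneg : (0 : ℝ) ≤ ((j : ℝ) + 1) * d := by positivity
    have h6 : (((j : ℝ) + 1) * d) ^ n ≤ ((b : ℝ) + 2) ^ n := pow_le_pow_left₀ hx_nonneg hxb n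
    have h9 : (Δ : ℝ) * ((((j : ℝ) + 1) * d) ^ n) ≤ F * (H m' : ℝ) := by
      calc (Δ : ℝ) * ((((j : ℝ) + 1) * d) ^ n)
          ≤ (Δ : ℝ) * (((b + n + 1).choose n : ℝ) * F) :=
            mul_le_mul_of_nonneg_left (h6.trans h7) hΔR.le
        _ = ((Δ : ℝ) * ((b + n + 1).choose n : ℝ)) * F := by ring
        _ ≤ (H m' : ℝ) * F := mul_le_mul_of_nonneg_right hmain hF.le
        _ = F * (H m' : ℝ) := by ring
    -- MVT bound
    have h8 : g (j + 1) - g j ≤ ((n : ℝ) + 1) * (d : ℝ) * ((((j : ℝ) + 1) * d) ^ n) := by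
      have hmvt := mvt_pow (((j : ℝ) + 1) * d) ((j : ℝ) * d) (n + 1)
        (by positivity) (by nlinarith [Nat.cast_nonneg (α := ℝ) j])
      rw [show (n + 1) - 1 = n from by omega] at hmvt
      have hxy : ((j : ℝ) + 1) * d - (j : ℝ) * d = d := by ring
      rw [hxy] at hmvt
      have hg1 : g (j + 1) = ((((j : ℝ) + 1)) * d) ^ (n + 1) := by
        rw [hgdef]; push_cast; ring_nf
      have hg0 : g j = (((j : ℝ)) * d) ^ (n + 1) := rfl
      rw [hg1, hg0]
      calc (((j : ℝ) + 1) * d) ^ (n + 1) - ((j : ℝ) * d) ^ (n + 1)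
          ≤ ((n + 1 : ℕ) : ℝ) * d * ((((j : ℝ) + 1) * d) ^ n) := hmvt
        _ = ((n : ℝ) + 1) * d * ((((j : ℝ) + 1) * d) ^ n) := by push_cast; ring
    have hgj : 0 ≤ ((((j : ℝ) + 1) * d) ^ n) := by positivity
    calc (Δ : ℝ) * (g (j + 1) - g j)
        ≤ (Δ : ℝ) * (((n : ℝ) + 1) * d * ((((j : ℝ) + 1) * d) ^ n)) := by
          apply mul_le_mul_of_nonneg_left h8 hΔR.le
      _ = ((n : ℝ) + 1) * d * ((Δ : ℝ) * ((((j : ℝ) + 1) * d) ^ n)) := by ring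
      _ ≤ ((n : ℝ) + 1) * d * (F * (H m' : ℝ)) := by
          apply mul_le_mul_of_nonneg_left h9 (by positivity)
      _ = (d : ℝ) * ((n : ℝ) + 1) * F * (H m' : ℝ) := by ring
  -- telescoping sum lower bound
  have htele := Finset.sum_range_sub g (M - Δ)
  have hg0 : g 0 = 0 := by
    rw [hgdef]
    simp
  have hgK : g (M - Δ) = ((m : ℝ) - Δ * d) ^ (n + 1) := by
    have hcast : ((M - Δ : ℕ) : ℝ) = (M : ℝ) - Δ := Nat.cast_sub (by omega)
    have hmM : (M : ℝ) * d = m := by exact_mod_cast hMd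
    show (((M - Δ : ℕ) : ℝ) * d) ^ (n + 1) = _
    rw [hcast]
    congr 1
    linear_combination hmM
  have hS : (Δ : ℝ) * ((m : ℝ) - Δ * d) ^ (n + 1) ≤ (d : ℝ) * ((n : ℝ) + 1) * F * S := by
    calc (Δ : ℝ) * ((m : ℝ) - Δ * d) ^ (n + 1)
        = ∑ j ∈ Finset.range (M - Δ), (Δ : ℝ) * (g (j + 1) - g j) := by
          rw [← Finset.mul_sum, htele, hg0, hgK]; ring
      _ ≤ ∑ j ∈ Finset.range (M - Δ), (d : ℝ) * ((n : ℝ) + 1) * F * (H ((Δ + j) * d) : ℝ) :=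
          Finset.sum_le_sum hkey
      _ = (d : ℝ) * ((n : ℝ) + 1) * F * ∑ j ∈ Finset.range (M - Δ), (H ((Δ + j) * d) : ℝ) := by
          rw [Finset.mul_sum]
      _ ≤ (d : ℝ) * ((n : ℝ) + 1) * F * S := by
          apply mul_le_mul_of_nonneg_left _ (by positivity)
          rw [← hsum2]; exact hsum1
  -- upper bound for LHS
  have hup' : F * ((m : ℝ) * ((H m : ℝ) + 1)) ≤ (Δ : ℝ) * ((m : ℝ) + n) ^ (n + 1) + F * m := by
    have hu := hupper m h1m
    have hch : ((m + n).choose n : ℝ) * F ≤ ((m : ℝ) + n) ^ n := by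
      have h := Nat.choose_le_pow_div n (m + n) (α := ℝ)
      have h2 := (le_div_iff₀ hF).mp h
      push_cast at h2 ⊢
      linarith
    have hm0 : (0 : ℝ) ≤ m := Nat.cast_nonneg m
    have hxn : (m : ℝ) ≤ (m : ℝ) + n := by linarith
    have hpow0 : (0 : ℝ) ≤ ((m : ℝ) + n) ^ n := by positivity
    calc F * ((m : ℝ) * ((H m : ℝ) + 1)) = (m : ℝ) * (F * (H m : ℝ)) + F * m := by ring
      _ ≤ (m : ℝ) * (F * ((Δ : ℝ) * ((m + n).choose n : ℝ))) + F * m := by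
          have h3 : F * (H m : ℝ) ≤ F * ((Δ : ℝ) * ((m + n).choose n : ℝ)) :=
            mul_le_mul_of_nonneg_left hu hF.le
          have h4 := mul_le_mul_of_nonneg_left h3 hm0
          linarith
      _ = (Δ : ℝ) * (m : ℝ) * (((m + n).choose n : ℝ) * F) + F * m := by ring
      _ ≤ (Δ : ℝ) * (m : ℝ) * (((m : ℝ) + n) ^ n) + F * m := by
          have := mul_le_mul_of_nonneg_left hch (by positivity : (0:ℝ) ≤ (Δ : ℝ) * m)
          linarith
      _ ≤ (Δ : ℝ) * ((m : ℝ) + n) ^ (n + 1) + F * m := by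
          rw [pow_succ]
          have h5 : (Δ : ℝ) * (m : ℝ) ≤ (Δ : ℝ) * ((m : ℝ) + n) :=
            mul_le_mul_of_nonneg_left hxn hΔR.le
          have h6 := mul_le_mul_of_nonneg_right h5 hpow0
          linarith
  -- final assembly
  have hpoly := ha₀ (m : ℝ) hmN
  have hQ : (0 : ℝ) < ((n : ℝ) + 1) * F := by positivity
  rw [← mul_le_mul_iff_right₀ hQ]
  calc ((n : ℝ) + 1) * F * ((m : ℝ) * ((H m : ℝ) + 1))
      = ((n : ℝ) + 1) * (F * ((m : ℝ) * ((H m : ℝ) + 1))) := by ring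
    _ ≤ ((n : ℝ) + 1) * ((Δ : ℝ) * ((m : ℝ) + n) ^ (n + 1) + F * m) :=
        mul_le_mul_of_nonneg_left hup' (by positivity)
    _ = (Δ : ℝ) * ((n : ℝ) + 1) * ((m : ℝ) + n) ^ (n + 1) + ((n : ℝ) + 1) * F * m := by ring
    _ ≤ (Δ : ℝ) * ((n : ℝ) + 1 + ε) * ((m : ℝ) - Δ * d) ^ (n + 1) := hpoly
    _ = ((n : ℝ) + 1 + ε) * ((Δ : ℝ) * ((m : ℝ) - Δ * d) ^ (n + 1)) := by ring
    _ ≤ ((n : ℝ) + 1 + ε) * ((d : ℝ) * ((n : ℝ) + 1) * F * S) :=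
        mul_le_mul_of_nonneg_left hS (by positivity)
    _ = ((n : ℝ) + 1) * F * ((d : ℝ) * ((n : ℝ) + 1 + ε) * S) := by ring
end

section
/- Let n, Δ, d be positive integers. Define T(t) = ∑_{i=1}^{t} G(id) where G(z) = C(z+n+1,n+1) - C(z-Δ+n+1,n+1) = (Δ/n!)z^n + c_1 z^{n-1} + ... + c_n. Then for all integers m divisible by d (with t = m/d - 1), d·T(m/d - 1) ≥ (Δ/(n+1)!)·m^(n+1) - ((Δd + Δ|n+2-Δ|)/(2·n!))·m^n - (n+1)^3·(2Δ)^(n+1)·m^(n-1). -/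
open Finset

private lemma geom_aux (a : ℝ) (k : ℕ) :
    (a + 1) ^ (k+1) - a ^ (k+1) = ∑ i ∈ range (k+1), (a+1) ^ i * a ^ (k - i) := by
  have h := geom_sum₂_mul (a+1) a (k+1)
  rw [show a + 1 - a = (1:ℝ) by ring, mul_one] at h
  rw [← h]
  exact Finset.sum_congr rfl fun i hi => by norm_num

private lemma geom_low (a : ℝ) (ha : 0 ≤ a) (k : ℕ) :
    ((k:ℝ)+1) * a ^ k ≤ ∑ i ∈ range (k+1), (a+1) ^ i * a ^ (k - i) := by
  have : ∀ i ∈ range (k+1), a ^ k ≤ (a+1) ^ i * a ^ (k - i) := by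
    intro i hi
    have hik : i ≤ k := Nat.lt_succ_iff.1 (mem_range.1 hi)
    have e : a ^ i * a ^ (k - i) = a ^ k := by rw [← pow_add, Nat.add_sub_cancel' hik]
    have h1 : a ^ i ≤ (a+1) ^ i := pow_le_pow_left₀ ha (by linarith) i
    nlinarith [pow_nonneg ha (k - i)]
  calc ((k:ℝ)+1) * a ^ k = ∑ _i ∈ range (k+1), a ^ k := by
        rw [Finset.sum_const, card_range]; push_cast; ring
    _ ≤ _ := Finset.sum_le_sum this

private lemma geom_up (a : ℝ) (ha : 0 ≤ a) (k : ℕ) :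
    ∑ i ∈ range (k+1), (a+1) ^ i * a ^ (k - i) ≤ ((k:ℝ)+1) * (a ^ k + (a+1) ^ k) / 2 := by
  have hrefl : ∑ j ∈ range (k+1), (a+1)^(k-j) * a^j = ∑ j ∈ range (k+1), (a+1)^j * a^(k-j) := by
    rw [← Finset.sum_range_reflect]
    refine Finset.sum_congr rfl fun j hj => ?_
    have hjk : j ≤ k := Nat.lt_succ_iff.1 (mem_range.1 hj)
    simp only [Nat.add_sub_cancel]
    rw [Nat.sub_sub_self hjk]
  have key : ∀ j ∈ range (k+1), (a+1)^j * a^(k-j) + (a+1)^(k-j) * a^j ≤ a^k + (a+1)^k := by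
    intro j hj
    have hjk : j ≤ k := Nat.lt_succ_iff.1 (mem_range.1 hj)
    have h1 : a^j ≤ (a+1)^j := pow_le_pow_left₀ ha (by linarith) j
    have h2 : a^(k-j) ≤ (a+1)^(k-j) := pow_le_pow_left₀ ha (by linarith) _
    have e1 : a^j * a^(k-j) = a^k := by rw [← pow_add, Nat.add_sub_cancel' hjk]
    have e2 : (a+1)^j * (a+1)^(k-j) = (a+1)^k := by rw [← pow_add, Nat.add_sub_cancel' hjk]
    nlinarith [mul_nonneg (sub_nonneg.2 h1) (sub_nonneg.2 h2)]
  have h2 : 2 * ∑ i ∈ range (k+1), (a+1)^i * a^(k-i)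
      ≤ ((k:ℝ)+1) * (a ^ k + (a+1) ^ k) := by
    calc 2 * ∑ i ∈ range (k+1), (a+1)^i * a^(k-i)
        = (∑ i ∈ range (k+1), (a+1)^i * a^(k-i)) + ∑ j ∈ range (k+1), (a+1)^(k-j) * a^j := by
          rw [hrefl]; ring
      _ = ∑ i ∈ range (k+1), ((a+1)^i * a^(k-i) + (a+1)^(k-i) * a^i) := by
          rw [Finset.sum_add_distrib]
      _ ≤ ∑ _i ∈ range (k+1), (a^k + (a+1)^k) := Finset.sum_le_sum key
      _ = ((k:ℝ)+1) * (a ^ k + (a+1) ^ k) := by rw [Finset.sum_const, card_range]; push_cast; ring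
  linarith

private lemma sum_pow_le (k : ℕ) (t : ℕ) :
    ∑ i ∈ Icc 1 t, (i:ℝ)^k ≤ ((t:ℝ)+1)^(k+1)/((k:ℝ)+1) := by
  induction t with
  | zero => simp; positivity
  | succ t ih =>
    rw [Finset.sum_Icc_succ_top (by omega : 1 ≤ t+1)]
    have hk1 : (0:ℝ) < (k:ℝ)+1 := by positivity
    have ha : (0:ℝ) ≤ (t:ℝ)+1 := by positivity
    have key : ((k:ℝ)+1) * ((t:ℝ)+1)^k ≤ ((t:ℝ)+2)^(k+1) - ((t:ℝ)+1)^(k+1) := by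
      have := geom_low ((t:ℝ)+1) ha k
      rw [show ((t:ℝ)+2) = ((t:ℝ)+1) + 1 by ring, geom_aux]
      linarith
    have h3 : ((t:ℝ)+1)^k ≤ (((t:ℝ)+2)^(k+1) - ((t:ℝ)+1)^(k+1))/((k:ℝ)+1) :=
      (le_div_iff₀ hk1).2 (by linarith)
    rw [sub_div] at h3
    push_cast
    rw [show ((t:ℝ) + 1 + 1) = (t:ℝ) + 2 from by ring]
    linarith

private lemma le_sum_pow (k : ℕ) (hk : 1 ≤ k) (t : ℕ) :
    ((t:ℝ)+1)^(k+1)/((k:ℝ)+1) - ((t:ℝ)+1)^k/2 ≤ ∑ i ∈ Icc 1 t, (i:ℝ)^k := by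
  have hk1 : (0:ℝ) < (k:ℝ)+1 := by positivity
  induction t with
  | zero =>
    simp only [Nat.cast_zero, zero_add, one_pow, Icc_self]
    have hk2 : (2:ℝ) ≤ (k:ℝ)+1 := by exact_mod_cast Nat.succ_le_succ hk
    have : 1/((k:ℝ)+1) ≤ 1/2 := by
      apply one_div_le_one_div_of_le <;> linarith
    rw [one_div, one_div] at this
    simp
    linarith
  | succ t ih =>
    rw [Finset.sum_Icc_succ_top (by omega : 1 ≤ t+1)]
    have ha : (0:ℝ) ≤ (t:ℝ)+1 := by positivity
    have key : ((t:ℝ)+2)^(k+1) - ((t:ℝ)+1)^(k+1) ≤ ((k:ℝ)+1) * (((t:ℝ)+1)^k + ((t:ℝ)+2)^k)/2 := by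
      have := geom_up ((t:ℝ)+1) ha k
      rw [show ((t:ℝ)+2) = ((t:ℝ)+1) + 1 by ring, geom_aux]
      linarith
    have h3 : (((t:ℝ)+2)^(k+1))/((k:ℝ)+1) - (((t:ℝ)+1)^(k+1))/((k:ℝ)+1)
        ≤ (((t:ℝ)+1)^k + ((t:ℝ)+2)^k)/2 := by
      rw [div_sub_div_same, div_le_iff₀ hk1]
      calc ((t:ℝ)+2)^(k+1) - ((t:ℝ)+1)^(k+1) ≤ ((k:ℝ)+1) * (((t:ℝ)+1)^k + ((t:ℝ)+2)^k)/2 := key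
        _ = (((t:ℝ)+1)^k + ((t:ℝ)+2)^k)/2 * ((k:ℝ)+1) := by ring
    push_cast
    rw [show ((t:ℝ) + 1 + 1) = (t:ℝ) + 2 from by ring]
    linarith


private lemma expand (b : ℕ → ℝ) (s : Finset ℕ) :
    ∃ a : ℕ → ℝ,
      (∀ z : ℝ, ∏ j ∈ s, (z + b j) = ∑ k ∈ range (s.card + 1), a k * z ^ k) ∧
      (∀ k, s.card < k → a k = 0) ∧
      a s.card = 1 ∧
      (0 < s.card → a (s.card - 1) = ∑ j ∈ s, b j) ∧
      (2 ≤ s.card → a (s.card - 2) = ((∑ j ∈ s, b j)^2 - ∑ j ∈ s, (b j)^2)/2) ∧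
      ∑ k ∈ range (s.card + 1), |a k| ≤ ∏ j ∈ s, (1 + |b j|) := by
  induction s using Finset.cons_induction with
  | empty =>
    refine ⟨fun k => if k = 0 then 1 else 0, by simp, fun k hk => by
      simp only [Finset.card_empty] at hk; beta_reduce; rw [if_neg (by omega : ¬ k = 0)], by simp, by simp, by simp, by simp⟩
  | cons i s hi ih =>
    obtain ⟨a, hev, hz, htop, hs1, hs2, hb⟩ := ih
    set c := s.card with hc
    have hcc : (Finset.cons i s hi).card = c + 1 := by rw [Finset.card_cons]
    refine ⟨fun k => (if k = 0 then 0 else a (k-1)) + b i * a k, ?_, ?_, ?_, ?_, ?_, ?_⟩ <;>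
      rw [hcc]
    · intro z
      have e1 : ∑ k ∈ range (c + 1 + 1), ((if k = 0 then (0:ℝ) else a (k-1)) + b i * a k) * z ^ k
          = (∑ k ∈ range (c + 1 + 1), (if k = 0 then (0:ℝ) else a (k-1)) * z ^ k)
            + ∑ k ∈ range (c + 1 + 1), b i * (a k * z ^ k) := by
        rw [← Finset.sum_add_distrib]
        exact Finset.sum_congr rfl fun k _ => by ring
      have e2 : ∑ k ∈ range (c + 1 + 1), (if k = 0 then (0:ℝ) else a (k-1)) * z ^ k
          = ∑ k ∈ range (c + 1), z * (a k * z ^ k) := by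
        rw [Finset.sum_range_succ' (fun k => (if k = 0 then (0:ℝ) else a (k-1)) * z ^ k) (c+1)]
        simp only [Nat.succ_ne_zero, if_false, if_pos rfl, Nat.add_sub_cancel, zero_mul, add_zero,
          ite_true]
        exact Finset.sum_congr rfl fun k _ => by ring
      have e3 : ∑ k ∈ range (c + 1 + 1), b i * (a k * z ^ k)
          = ∑ k ∈ range (c + 1), b i * (a k * z ^ k) := by
        rw [Finset.sum_range_succ, hz (c+1) (by omega)]
        ring
      rw [Finset.prod_cons, hev z, e1, e2, e3, ← Finset.mul_sum, ← Finset.mul_sum]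
      ring
    · intro k hk
      beta_reduce
      rw [if_neg (by omega : ¬ k = 0), hz k (by omega), hz (k-1) (by omega)]
      ring
    · beta_reduce
      rw [if_neg (by omega : ¬ c + 1 = 0), Nat.add_sub_cancel, htop, hz (c+1) (by omega)]
      ring
    · intro _
      beta_reduce
      rw [Nat.add_sub_cancel, Finset.sum_cons]
      rcases Nat.eq_zero_or_pos c with h0 | hpos
      · have hse : s = ∅ := Finset.card_eq_zero.1 (by omega)
        have ha0 : a 0 = 1 := by rw [← h0]; exact htop
        rw [h0, if_pos rfl, hse, ha0]
        simp
      · rw [if_neg (by omega : ¬ c = 0), htop, hs1 hpos]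
        ring
    · intro hk2
      beta_reduce
      have hc1 : 1 ≤ c := by omega
      rw [show c + 1 - 2 = c - 1 by omega, Finset.sum_cons, Finset.sum_cons]
      rcases Nat.lt_or_ge c 2 with h1 | h2
      · have hc2 : c = 1 := by omega
        obtain ⟨j, hj⟩ := Finset.card_eq_one.1 (show s.card = 1 by omega)
        have ha0 : a 0 = b j := by
          have h := hs1 (by omega)
          rw [hc2] at h
          simpa [hj] using h
        rw [hc2, show (1:ℕ) - 1 = 0 from rfl, if_pos rfl, ha0, hj]
        simp only [Finset.sum_singleton]
        ring
      · rw [if_neg (by omega : ¬ c - 1 = 0), show c - 1 - 1 = c - 2 by omega,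
          hs2 h2, hs1 (by omega)]
        ring
    · rw [Finset.prod_cons]
      have habs : ∀ k ∈ range (c + 1 + 1),
          |(if k = 0 then (0:ℝ) else a (k-1)) + b i * a k|
          ≤ |if k = 0 then (0:ℝ) else a (k-1)| + |b i| * |a k| := by
        intro k _
        calc |(if k = 0 then (0:ℝ) else a (k-1)) + b i * a k|
            ≤ |if k = 0 then (0:ℝ) else a (k-1)| + |b i * a k| := abs_add_le _ _
          _ = _ := by rw [abs_mul]
      have h2 : ∑ k ∈ range (c + 1 + 1), |if k = 0 then (0:ℝ) else a (k-1)|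
          = ∑ k ∈ range (c + 1), |a k| := by
        rw [Finset.sum_range_succ' (fun k => |if k = 0 then (0:ℝ) else a (k-1)|) (c+1)]
        simp only [Nat.succ_ne_zero, if_false, ite_true, Nat.add_sub_cancel, abs_zero, add_zero]
      have h3 : ∑ k ∈ range (c + 1 + 1), |a k| = ∑ k ∈ range (c + 1), |a k| := by
        rw [Finset.sum_range_succ, hz (c+1) (by omega), abs_zero, add_zero]
      have h1 : ∑ k ∈ range (c + 1 + 1), |(if k = 0 then (0:ℝ) else a (k-1)) + b i * a k|
          ≤ (∑ k ∈ range (c + 1), |a k|) + |b i| * ∑ k ∈ range (c + 1), |a k| := by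
        calc ∑ k ∈ range (c + 1 + 1), |(if k = 0 then (0:ℝ) else a (k-1)) + b i * a k|
            ≤ ∑ k ∈ range (c + 1 + 1), (|if k = 0 then (0:ℝ) else a (k-1)| + |b i| * |a k|) :=
              Finset.sum_le_sum habs
          _ = _ := by rw [Finset.sum_add_distrib, ← Finset.mul_sum, h2, h3]
      calc ∑ k ∈ range (c + 1 + 1), |(if k = 0 then (0:ℝ) else a (k-1)) + b i * a k|
          ≤ (1 + |b i|) * ∑ k ∈ range (c + 1), |a k| := by linarith
        _ ≤ (1 + |b i|) * ∏ j ∈ s, (1 + |b j|) :=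
            mul_le_mul_of_nonneg_left hb (by positivity)


private lemma prod_Icc_one_add (N : ℕ) :
    ∏ j ∈ Icc 1 N, (1 + (j:ℝ)) = Nat.factorial (N + 1) := by
  induction N with
  | zero => simp
  | succ N ih =>
    rw [Finset.prod_Icc_succ_top (by omega : 1 ≤ N + 1), ih, Nat.factorial_succ (N+1)]
    push_cast
    ring

private lemma sum_Icc_id (N : ℕ) :
    (∑ j ∈ Icc 1 N, (j:ℝ)) * 2 = N * (N + 1) := by
  induction N with
  | zero => simp
  | succ N ih =>
    rw [Finset.sum_Icc_succ_top (by omega : 1 ≤ N + 1)]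
    push_cast
    push_cast at ih
    ring_nf
    ring_nf at ih
    linarith


set_option maxHeartbeats 1000000 in
/-- With `G(z) = C(z+n+1,n+1) - C(z-Δ+n+1,n+1)` viewed as a real function and
`T(t) = ∑_{i=1}^t G(id)`, for every positive multiple `m` of `d`,
`d·T(m/d - 1) ≥ (Δ/(n+1)!)·m^(n+1) - ((Δd + Δ|n+2-Δ|)/(2·n!))·m^n
  - (n+1)^3·(2Δ)^(n+1)·m^(n-1)`. -/
theorem T_lower_bound (n Δ d : ℕ) (hn : 0 < n) (hΔ : 0 < Δ) (hd : 0 < d)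
    (G : ℝ → ℝ)
    (hG : ∀ z : ℝ, G z =
      ((∏ j ∈ Finset.Icc 1 (n + 1), (z + j)) -
        ∏ j ∈ Finset.Icc 1 (n + 1), (z - Δ + j)) / (Nat.factorial (n + 1)))
    (m : ℕ) (hm : 0 < m) (hdm : d ∣ m) :
    (Δ : ℝ) / Nat.factorial (n + 1) * m ^ (n + 1) -
        ((Δ : ℝ) * d + Δ * |(n : ℝ) + 2 - Δ|) / (2 * Nat.factorial n) * m ^ n -
        ((n : ℝ) + 1) ^ 3 * (2 * Δ) ^ (n + 1) * m ^ (n - 1) ≤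
      d * ∑ i ∈ Finset.Icc 1 (m / d - 1), G (i * d) := by
  obtain ⟨p, rfl⟩ : ∃ p, n = p + 1 := ⟨n - 1, by omega⟩
  simp only [Nat.add_sub_cancel]
  set t : ℕ := m / d - 1 with ht
  have h1d : 1 ≤ m / d := (Nat.one_le_div_iff hd).2 (Nat.le_of_dvd hm hdm)
  have htm : m = d * (t + 1) := by
    have h2 : t + 1 = m / d := by omega
    rw [h2, Nat.mul_div_cancel' hdm]
  have hM : (m:ℝ) = (d:ℝ) * ((t:ℝ) + 1) := by rw [htm]; push_cast; ring
  have hm1 : (1:ℝ) ≤ (m:ℝ) := by exact_mod_cast hm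
  have hΔ1 : (1:ℝ) ≤ (Δ:ℝ) := by exact_mod_cast hΔ
  have hcard : (Finset.Icc 1 (p + 1 + 1)).card = p + 2 := by rw [Nat.card_Icc]; omega
  obtain ⟨a1, h1ev, h1z, h1top, h1s1, h1s2, h1b⟩ := expand (fun j => (j:ℝ)) (Finset.Icc 1 (p+1+1))
  obtain ⟨a2, h2ev, h2z, h2top, h2s1, h2s2, h2b⟩ :=
    expand (fun j => (j:ℝ) - (Δ:ℝ)) (Finset.Icc 1 (p+1+1))
  rw [hcard] at h1ev h1z h1top h1s1 h1s2 h1b h2ev h2z h2top h2s1 h2s2 h2b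
  set σ : ℝ := ∑ j ∈ Finset.Icc 1 (p+1+1), (j:ℝ) with hσdef
  have hσ : σ * 2 = ((p:ℝ)+2) * ((p:ℝ)+3) := by
    have := sum_Icc_id (p+2)
    rw [hσdef]
    push_cast at this ⊢
    rw [show p + 1 + 1 = p + 2 from rfl]
    linarith
  have hS2 : ∑ j ∈ Finset.Icc 1 (p+1+1), ((j:ℝ) - (Δ:ℝ)) = σ - ((p:ℝ)+2) * Δ := by
    rw [Finset.sum_sub_distrib, Finset.sum_const, hcard]
    push_cast
    ring
  set Q : ℝ := ∑ j ∈ Finset.Icc 1 (p+1+1), (j:ℝ)^2 with hQdef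
  have hQ2 : ∑ j ∈ Finset.Icc 1 (p+1+1), ((j:ℝ) - (Δ:ℝ))^2
      = Q - 2*Δ*σ + ((p:ℝ)+2) * Δ^2 := by
    calc ∑ j ∈ Finset.Icc 1 (p+1+1), ((j:ℝ) - (Δ:ℝ))^2
        = ∑ j ∈ Finset.Icc 1 (p+1+1), (((j:ℝ)^2 - 2*Δ*(j:ℝ)) + (Δ:ℝ)^2) :=
          Finset.sum_congr rfl fun j _ => by ring
      _ = (Q - 2*Δ*σ) + ((p:ℝ)+2) * Δ^2 := by
          rw [Finset.sum_add_distrib, Finset.sum_sub_distrib, ← Finset.mul_sum,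
            Finset.sum_const, hcard]
          push_cast
          ring
      _ = _ := by ring
  have hFpos : (0:ℝ) < ((p+1+1).factorial : ℝ) := by
    exact_mod_cast Nat.factorial_pos _
  have hF1pos : (0:ℝ) < ((p+1).factorial : ℝ) := by
    exact_mod_cast Nat.factorial_pos _
  have hFs : ((p+1+1).factorial : ℝ) = ((p:ℝ)+2) * ((p+1).factorial : ℝ) := by
    rw [Nat.factorial_succ (p+1)]
    push_cast
    ring
  set A : ℕ → ℝ := fun k => (a1 k - a2 k) / ((p+1+1).factorial : ℝ) with hA
  have hGA : ∀ z : ℝ, G z = ∑ k ∈ Finset.range (p + 2 + 1), A k * z ^ k := by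
    intro z
    rw [hG z]
    have hprod2 : ∏ j ∈ Finset.Icc 1 (p+1+1), (z - (Δ:ℝ) + (j:ℝ))
        = ∏ j ∈ Finset.Icc 1 (p+1+1), (z + ((j:ℝ) - (Δ:ℝ))) :=
      Finset.prod_congr rfl fun j _ => by ring
    rw [hprod2, h1ev z, h2ev z, ← Finset.sum_sub_distrib, Finset.sum_div]
    exact Finset.sum_congr rfl fun k _ => by rw [hA]; ring
  set S : ℕ → ℝ := fun k => ∑ i ∈ Finset.Icc 1 t, (i:ℝ)^k with hSdef
  have hSnn : ∀ k, 0 ≤ S k := fun k => Finset.sum_nonneg fun i _ => by positivity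
  have hSup : ∀ k, S k ≤ ((t:ℝ)+1)^(k+1)/((k:ℝ)+1) := fun k => sum_pow_le k t
  have hmain : (d:ℝ) * ∑ i ∈ Finset.Icc 1 t, G ((i:ℝ) * (d:ℝ))
      = ∑ k ∈ Finset.range (p + 2 + 1), A k * (d:ℝ)^(k+1) * S k := by
    rw [Finset.mul_sum]
    have e : ∀ i ∈ Finset.Icc 1 t, (d:ℝ) * G ((i:ℝ) * (d:ℝ))
        = ∑ k ∈ Finset.range (p + 2 + 1), (A k * (d:ℝ)^(k+1)) * (i:ℝ)^k := by
      intro i _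
      rw [hGA ((i:ℝ) * (d:ℝ)), Finset.mul_sum]
      exact Finset.sum_congr rfl fun k _ => by rw [mul_pow]; ring
    rw [Finset.sum_congr rfl e, Finset.sum_comm]
    refine Finset.sum_congr rfl fun k _ => ?_
    rw [hSdef, Finset.mul_sum]
    try exact Finset.sum_congr rfl fun i _ => by ring
  have hAtop : A (p + 2) = 0 := by
    rw [hA]
    beta_reduce
    rw [h1top, h2top]
    norm_num
  have hAn : A (p + 1) = (Δ:ℝ) / ((p+1).factorial : ℝ) := by
    have e1 : a1 (p+1) = σ := by
      have := h1s1 (by omega)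
      rwa [show p + 2 - 1 = p + 1 by omega] at this
    have e2 : a2 (p+1) = σ - ((p:ℝ)+2) * Δ := by
      have := h2s1 (by omega)
      rw [show p + 2 - 1 = p + 1 by omega] at this
      rw [this, hS2]
    rw [hA]
    beta_reduce
    rw [e1, e2, hFs]
    field_simp
    ring
  have hAp : A p = ((p:ℝ)+1) * Δ * ((p:ℝ)+3-Δ) / (2 * ((p+1).factorial : ℝ)) := by
    have e1 : a1 p = (σ^2 - Q)/2 := by
      have := h1s2 (by omega)
      rwa [show p + 2 - 2 = p by omega] at this
    have e2 : a2 p = ((σ - ((p:ℝ)+2) * Δ)^2 - (Q - 2*Δ*σ + ((p:ℝ)+2) * Δ^2))/2 := by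
      have := h2s2 (by omega)
      rw [show p + 2 - 2 = p by omega] at this
      rw [this, hS2, hQ2]
    have e3 : a1 p - a2 p = ((p:ℝ)+1) * ((p:ℝ)+2) * Δ * ((p:ℝ)+3-Δ) / 2 := by
      rw [e1, e2]
      linear_combination (((p:ℝ)+1) * Δ / 2) * hσ
    rw [hA]
    beta_reduce
    rw [e3, hFs]
    field_simp
  -- bound on the sum of |A k| for small k
  have h1b' : ∑ k ∈ Finset.range (p + 2 + 1), |a1 k| ≤ ((p+3).factorial : ℝ) := by
    refine h1b.trans ?_
    have : ∏ j ∈ Finset.Icc 1 (p+1+1), (1 + |(j:ℝ)|)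
        = ∏ j ∈ Finset.Icc 1 (p+1+1), (1 + (j:ℝ)) :=
      Finset.prod_congr rfl fun j _ => by rw [abs_of_nonneg (Nat.cast_nonneg j)]
    rw [this, prod_Icc_one_add (p+1+1)]
  have h2b' : ∑ k ∈ Finset.range (p + 2 + 1), |a2 k| ≤ (Δ:ℝ)^(p+2) * ((p+3).factorial : ℝ) := by
    refine h2b.trans ?_
    have hstep : ∏ j ∈ Finset.Icc 1 (p+1+1), (1 + |(j:ℝ) - (Δ:ℝ)|)
        ≤ ∏ j ∈ Finset.Icc 1 (p+1+1), ((Δ:ℝ) * (1 + (j:ℝ))) := by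
      refine Finset.prod_le_prod (fun j _ => by positivity) (fun j hj => ?_)
      have hj1 : (1:ℝ) ≤ (j:ℝ) := by
        exact_mod_cast (Finset.mem_Icc.1 hj).1
      rcases abs_cases ((j:ℝ) - (Δ:ℝ)) with ⟨h, _⟩ | ⟨h, _⟩ <;> rw [h] <;> nlinarith
    refine hstep.trans ?_
    rw [Finset.prod_mul_distrib, Finset.prod_const, hcard, prod_Icc_one_add (p+1+1)]
  have hAsum : ∑ k ∈ Finset.range p, |A k| ≤ 2 * ((p:ℝ)+3) * (Δ:ℝ)^(p+2) := by
    have step1 : ∑ k ∈ Finset.range p, |A k|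
        ≤ ∑ k ∈ Finset.range (p + 2 + 1), (|a1 k| + |a2 k|) / ((p+1+1).factorial : ℝ) := by
      calc ∑ k ∈ Finset.range p, |A k|
          ≤ ∑ k ∈ Finset.range p, (|a1 k| + |a2 k|) / ((p+1+1).factorial : ℝ) := by
            refine Finset.sum_le_sum fun k _ => ?_
            rw [hA]
            beta_reduce
            rw [abs_div, abs_of_nonneg hFpos.le]
            gcongr
            exact abs_sub _ _
        _ ≤ _ := Finset.sum_le_sum_of_subset_of_nonneg
            (Finset.range_subset_range.2 (by omega)) (fun k _ _ => by positivity)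
    have step2 : ∑ k ∈ Finset.range (p + 2 + 1), (|a1 k| + |a2 k|) / ((p+1+1).factorial : ℝ)
        = ((∑ k ∈ Finset.range (p + 2 + 1), |a1 k|)
          + ∑ k ∈ Finset.range (p + 2 + 1), |a2 k|) / ((p+1+1).factorial : ℝ) := by
      rw [← Finset.sum_add_distrib, Finset.sum_div]
    have hf3 : ((p+3).factorial : ℝ) = ((p:ℝ)+3) * ((p+1+1).factorial : ℝ) := by
      rw [show p + 3 = (p+1+1) + 1 from rfl, Nat.factorial_succ]
      push_cast
      ring
    have hΔp : (1:ℝ) ≤ (Δ:ℝ)^(p+2) := one_le_pow₀ hΔ1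
    calc ∑ k ∈ Finset.range p, |A k|
        ≤ (((p+3).factorial : ℝ) + (Δ:ℝ)^(p+2) * ((p+3).factorial : ℝ))
            / ((p+1+1).factorial : ℝ) := by
          rw [step2] at step1
          refine step1.trans ?_
          gcongr
      _ = ((p:ℝ)+3) * (1 + (Δ:ℝ)^(p+2)) := by
          rw [hf3]
          field_simp
      _ ≤ 2 * ((p:ℝ)+3) * (Δ:ℝ)^(p+2) := by nlinarith [hΔp]
  -- three bounds
  have hdkS : ∀ k, (d:ℝ)^(k+1) * S k ≤ (m:ℝ)^(k+1) := by
    intro k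
    have h2 : S k ≤ ((t:ℝ)+1)^(k+1) := by
      refine (hSup k).trans ?_
      apply div_le_self (by positivity)
      have : (0:ℝ) ≤ (k:ℝ) := Nat.cast_nonneg k
      linarith
    calc (d:ℝ)^(k+1) * S k ≤ (d:ℝ)^(k+1) * ((t:ℝ)+1)^(k+1) :=
          mul_le_mul_of_nonneg_left h2 (by positivity)
      _ = (m:ℝ)^(k+1) := by rw [← mul_pow, ← hM]
  have B1 : (Δ:ℝ) / ((p+1+1).factorial : ℝ) * (m:ℝ)^(p+1+1)
      - (Δ:ℝ) * (d:ℝ) / (2 * ((p+1).factorial : ℝ)) * (m:ℝ)^(p+1)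
      ≤ A (p+1) * (d:ℝ)^(p+1+1) * S (p+1) := by
    have hlow := le_sum_pow (p+1) (by omega) t
    have hApos : (0:ℝ) ≤ A (p+1) * (d:ℝ)^(p+1+1) := by
      rw [hAn]; positivity
    have h := mul_le_mul_of_nonneg_left hlow hApos
    have heq : A (p+1) * (d:ℝ)^(p+1+1)
        * (((t:ℝ)+1)^(p+1+1)/(((p+1:ℕ):ℝ)+1) - ((t:ℝ)+1)^(p+1)/2)
        = (Δ:ℝ) / ((p+1+1).factorial : ℝ) * (m:ℝ)^(p+1+1)
          - (Δ:ℝ) * (d:ℝ) / (2 * ((p+1).factorial : ℝ)) * (m:ℝ)^(p+1) := by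
      have e1 : (m:ℝ)^(p+1+1) = (d:ℝ)^(p+1+1) * ((t:ℝ)+1)^(p+1+1) := by rw [hM, mul_pow]
      have e2 : (m:ℝ)^(p+1) = (d:ℝ)^(p+1) * ((t:ℝ)+1)^(p+1) := by rw [hM, mul_pow]
      rw [hAn, e1, e2, hFs]
      push_cast
      field_simp
      ring
    calc (Δ:ℝ) / ((p+1+1).factorial : ℝ) * (m:ℝ)^(p+1+1)
        - (Δ:ℝ) * (d:ℝ) / (2 * ((p+1).factorial : ℝ)) * (m:ℝ)^(p+1)
        = A (p+1) * (d:ℝ)^(p+1+1)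
          * (((t:ℝ)+1)^(p+1+1)/(((p+1:ℕ):ℝ)+1) - ((t:ℝ)+1)^(p+1)/2) := heq.symm
      _ ≤ A (p+1) * (d:ℝ)^(p+1+1) * S (p+1) := by
          exact mul_le_mul_of_nonneg_left hlow hApos
  have B2 : -((Δ:ℝ) * |((p:ℝ)+1) + 2 - (Δ:ℝ)| / (2 * ((p+1).factorial : ℝ)) * (m:ℝ)^(p+1))
      ≤ A p * (d:ℝ)^(p+1) * S p := by
    have habsAp : |A p| = ((p:ℝ)+1) * Δ * |(p:ℝ)+3-Δ| / (2 * ((p+1).factorial : ℝ)) := by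
      rw [hAp, abs_div, abs_mul, abs_mul,
        abs_of_nonneg (by positivity : (0:ℝ) ≤ (p:ℝ)+1),
        abs_of_nonneg (by positivity : (0:ℝ) ≤ (Δ:ℝ)),
        abs_of_nonneg (by positivity : (0:ℝ) ≤ 2 * ((p+1).factorial : ℝ))]
    have h2 : (d:ℝ)^(p+1) * S p ≤ (m:ℝ)^(p+1)/((p:ℝ)+1) := by
      calc (d:ℝ)^(p+1) * S p ≤ (d:ℝ)^(p+1) * (((t:ℝ)+1)^(p+1)/((p:ℝ)+1)) :=
            mul_le_mul_of_nonneg_left (hSup p) (by positivity)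
        _ = (m:ℝ)^(p+1)/((p:ℝ)+1) := by
            rw [hM, mul_pow]
            ring
    have h3 : -|A p| * ((m:ℝ)^(p+1)/((p:ℝ)+1)) ≤ -|A p| * ((d:ℝ)^(p+1) * S p) :=
      mul_le_mul_of_nonpos_left h2 (by simp [abs_nonneg])
    have h4 : -|A p| * ((d:ℝ)^(p+1) * S p) ≤ A p * ((d:ℝ)^(p+1) * S p) :=
      mul_le_mul_of_nonneg_right (neg_abs_le _) (by positivity)
    have h5 : -|A p| * ((m:ℝ)^(p+1)/((p:ℝ)+1))
        = -((Δ:ℝ) * |(p:ℝ)+3-Δ| / (2 * ((p+1).factorial : ℝ)) * (m:ℝ)^(p+1)) := by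
      rw [habsAp]
      field_simp
    have h6 : |((p:ℝ)+1) + 2 - (Δ:ℝ)| = |(p:ℝ)+3-Δ| := by ring_nf
    rw [h6]
    calc -((Δ:ℝ) * |(p:ℝ)+3-Δ| / (2 * ((p+1).factorial : ℝ)) * (m:ℝ)^(p+1))
        = -|A p| * ((m:ℝ)^(p+1)/((p:ℝ)+1)) := h5.symm
      _ ≤ -|A p| * ((d:ℝ)^(p+1) * S p) := h3
      _ ≤ A p * ((d:ℝ)^(p+1) * S p) := h4
      _ = A p * (d:ℝ)^(p+1) * S p := by ring
  have B3 : -(((p:ℝ)+1+1)^3 * (2*(Δ:ℝ))^(p+1+1) * (m:ℝ)^p)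
      ≤ ∑ k ∈ Finset.range p, A k * (d:ℝ)^(k+1) * S k := by
    have habs : |∑ k ∈ Finset.range p, A k * (d:ℝ)^(k+1) * S k|
        ≤ ∑ k ∈ Finset.range p, |A k| * (m:ℝ)^p := by
      refine (Finset.abs_sum_le_sum_abs _ _).trans (Finset.sum_le_sum fun k hk => ?_)
      have hk1 : k + 1 ≤ p := Finset.mem_range.1 hk
      have hmk : (m:ℝ)^(k+1) ≤ (m:ℝ)^p := pow_le_pow_right₀ hm1 hk1
      calc |A k * (d:ℝ)^(k+1) * S k| = |A k| * ((d:ℝ)^(k+1) * S k) := by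
            rw [abs_mul, abs_mul, abs_of_nonneg (by positivity : (0:ℝ) ≤ (d:ℝ)^(k+1)),
              abs_of_nonneg (hSnn k), mul_assoc]
        _ ≤ |A k| * (m:ℝ)^(k+1) := mul_le_mul_of_nonneg_left (hdkS k) (abs_nonneg _)
        _ ≤ |A k| * (m:ℝ)^p := mul_le_mul_of_nonneg_left hmk (abs_nonneg _)
    have hsum2 : ∑ k ∈ Finset.range p, |A k| * (m:ℝ)^p
        ≤ (2 * ((p:ℝ)+3) * (Δ:ℝ)^(p+2)) * (m:ℝ)^p := by
      rw [← Finset.sum_mul]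
      exact mul_le_mul_of_nonneg_right hAsum (by positivity)
    have hcoef : 2 * ((p:ℝ)+3) * (Δ:ℝ)^(p+2) ≤ ((p:ℝ)+1+1)^3 * 2^(p+2) * (Δ:ℝ)^(p+2) := by
      have h4 : (4:ℝ) ≤ 2^(p+2) := by
        calc (4:ℝ) = 2^2 := by norm_num
          _ ≤ 2^(p+2) := pow_le_pow_right₀ (by norm_num) (by omega)
      have hp0 : (0:ℝ) ≤ (p:ℝ) := Nat.cast_nonneg p
      have hΔp : (0:ℝ) ≤ (Δ:ℝ)^(p+2) := by positivity
      have hcube : (0:ℝ) ≤ ((p:ℝ)+1+1)^3 := by positivity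
      calc 2 * ((p:ℝ)+3) * (Δ:ℝ)^(p+2)
          ≤ (4 * ((p:ℝ)+1+1)^3) * (Δ:ℝ)^(p+2) := by
            refine mul_le_mul_of_nonneg_right ?_ hΔp
            nlinarith [hp0, sq_nonneg ((p:ℝ)+2)]
        _ ≤ (((p:ℝ)+1+1)^3 * 2^(p+2)) * (Δ:ℝ)^(p+2) := by
            refine mul_le_mul_of_nonneg_right ?_ hΔp
            nlinarith [mul_le_mul_of_nonneg_left h4 hcube]
        _ = ((p:ℝ)+1+1)^3 * 2^(p+2) * (Δ:ℝ)^(p+2) := by ring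
    have heq2 : ((p:ℝ)+1+1)^3 * (2*(Δ:ℝ))^(p+1+1) * (m:ℝ)^p
        = (((p:ℝ)+1+1)^3 * 2^(p+2) * (Δ:ℝ)^(p+2)) * (m:ℝ)^p := by
      rw [mul_pow]
      ring
    have hneg := neg_abs_le (∑ k ∈ Finset.range p, A k * (d:ℝ)^(k+1) * S k)
    have hmp : (0:ℝ) ≤ (m:ℝ)^p := by positivity
    rw [heq2]
    linarith [habs, hsum2, hneg, mul_le_mul_of_nonneg_right hcoef hmp]
  have hsplit : ((Δ:ℝ) * (d:ℝ) + (Δ:ℝ) * |((p:ℝ)+1) + 2 - (Δ:ℝ)|) / (2 * ((p+1).factorial : ℝ))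
      * (m:ℝ)^(p+1)
      = (Δ:ℝ) * (d:ℝ) / (2 * ((p+1).factorial : ℝ)) * (m:ℝ)^(p+1)
        + (Δ:ℝ) * |((p:ℝ)+1) + 2 - (Δ:ℝ)| / (2 * ((p+1).factorial : ℝ)) * (m:ℝ)^(p+1) := by
    ring
  rw [hmain, Finset.sum_range_succ, Finset.sum_range_succ, Finset.sum_range_succ, hAtop,
    zero_mul, zero_mul, add_zero]
  push_cast at hsplit B1 B2 B3 ⊢
  linarith [B1, B2, B3]
end

section
/- Let k ≥ 2 be an integer and l a positive integer. Then C(k+1,2)·S_{k-1}(l) + C(k+1,3)·S_{k-2}(l) + ... + (k+1)·S_1(l) + l ≤ ((k+1)/2)·((l+1)^k - 1), where S_j(l) = ∑_{m=1}^l m^j. -/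
lemma choose_ineq_aux (k j : ℕ) (hj1 : 1 ≤ j) (hj : j ≤ k - 1) (hk : 2 ≤ k) :
    2 * (k + 1).choose j ≤ (k + 1) * k.choose j := by
  have h2 : 2 ≤ k + 1 - j := by omega
  calc 2 * (k + 1).choose j ≤ (k + 1 - j) * (k + 1).choose j :=
        Nat.mul_le_mul_right _ h2
    _ = (k + 1).choose j * (k + 1 - j) := by ring
    _ = k.choose j * (k + 1) := (Nat.choose_mul_succ_eq k j).symm
    _ = (k + 1) * k.choose j := by ring

lemma key_aux (k : ℕ) (hk : 2 ≤ k) (x : ℝ) (hx : 0 ≤ x) :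
    (∑ h ∈ Finset.Icc 2 k, ((k + 1).choose h : ℝ) * x ^ (k + 1 - h)) + 1 ≤
      ((k : ℝ) + 1) / 2 * ((x + 1) ^ k - x ^ k) := by
  have hexp : (x + 1) ^ k = (∑ j ∈ Finset.range k, (k.choose j : ℝ) * x ^ j) + x ^ k := by
    rw [add_pow, Finset.sum_range_succ]
    simp [mul_comm]
  have hrange : Finset.range k = insert 0 (Finset.Icc 1 (k - 1)) := by
    ext a; simp; omega
  have h0 : (0 : ℕ) ∉ Finset.Icc 1 (k - 1) := by simp
  have hreidx : (∑ h ∈ Finset.Icc 2 k, ((k + 1).choose h : ℝ) * x ^ (k + 1 - h)) =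
      ∑ j ∈ Finset.Icc 1 (k - 1), ((k + 1).choose j : ℝ) * x ^ j := by
    refine Finset.sum_bij' (fun h _ => k + 1 - h) (fun j _ => k + 1 - j) ?_ ?_ ?_ ?_ ?_
    · intro a ha; simp at ha ⊢; omega
    · intro a ha; simp at ha ⊢; omega
    · intro a ha; simp at ha ⊢; omega
    · intro a ha; simp at ha ⊢; omega
    · intro a ha; simp only [Finset.mem_Icc] at ha
      have h' : k + 1 - (k + 1 - a) = a := by omega
      simp only [Nat.choose_symm (show a ≤ k + 1 by omega), h']
  rw [hexp, hreidx]
  have hsum : ((k : ℝ) + 1) / 2 *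
        ((∑ j ∈ Finset.range k, (k.choose j : ℝ) * x ^ j) + x ^ k - x ^ k)
      = ((k : ℝ) + 1) / 2 +
        ∑ j ∈ Finset.Icc 1 (k - 1), ((k : ℝ) + 1) / 2 * ((k.choose j : ℝ) * x ^ j) := by
    rw [hrange, Finset.sum_insert h0, ← Finset.mul_sum, Nat.choose_zero_right]
    push_cast
    ring
  rw [hsum]
  have h1 : (1 : ℝ) ≤ ((k : ℝ) + 1) / 2 := by
    have : (2 : ℝ) ≤ k := by exact_mod_cast hk
    linarith
  have hterm : ∀ j ∈ Finset.Icc 1 (k - 1),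
      ((k + 1).choose j : ℝ) * x ^ j ≤ ((k : ℝ) + 1) / 2 * ((k.choose j : ℝ) * x ^ j) := by
    intro j hj
    simp only [Finset.mem_Icc] at hj
    have hc := choose_ineq_aux k j hj.1 hj.2 hk
    have hc' : ((k + 1).choose j : ℝ) ≤ ((k : ℝ) + 1) / 2 * (k.choose j : ℝ) := by
      have h2 : (2 : ℝ) * ((k + 1).choose j : ℝ) ≤ ((k : ℝ) + 1) * (k.choose j : ℝ) := by
        exact_mod_cast hc
      linarith
    have hxp : (0 : ℝ) ≤ x ^ j := pow_nonneg hx j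
    calc ((k + 1).choose j : ℝ) * x ^ j
        ≤ (((k : ℝ) + 1) / 2 * (k.choose j : ℝ)) * x ^ j :=
          mul_le_mul_of_nonneg_right hc' hxp
      _ = ((k : ℝ) + 1) / 2 * ((k.choose j : ℝ) * x ^ j) := by ring
  have := Finset.sum_le_sum hterm
  linarith

/-- For `k ≥ 2` and `l ≥ 1`,
`∑_{h=2}^{k} C(k+1,h)·S_{k+1-h}(l) + l ≤ ((k+1)/2)·((l+1)^k - 1)`,
where `S_j(l) = ∑_{m=1}^l m^j`. -/
theorem tail_sum_bound (k l : ℕ) (hk : 2 ≤ k) (hl : 0 < l) :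
    (∑ h ∈ Finset.Icc 2 k, ((k + 1).choose h : ℝ) *
        ∑ m ∈ Finset.Icc 1 l, (m : ℝ) ^ (k + 1 - h)) + l ≤
      ((k : ℝ) + 1) / 2 * (((l : ℝ) + 1) ^ k - 1) := by
  have hswap : (∑ h ∈ Finset.Icc 2 k, ((k + 1).choose h : ℝ) *
        ∑ m ∈ Finset.Icc 1 l, (m : ℝ) ^ (k + 1 - h)) + l
      = ∑ m ∈ Finset.Icc 1 l,
        ((∑ h ∈ Finset.Icc 2 k, ((k + 1).choose h : ℝ) * (m : ℝ) ^ (k + 1 - h)) + 1) := by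
    rw [Finset.sum_add_distrib]
    congr 1
    · simp_rw [Finset.mul_sum]
      exact Finset.sum_comm
    · simp [Nat.card_Icc]
  have htel : ∑ m ∈ Finset.Icc 1 l, (((m : ℝ) + 1) ^ k - (m : ℝ) ^ k)
      = ((l : ℝ) + 1) ^ k - 1 := by
    rw [← Finset.Ico_add_one_right_eq_Icc, Finset.sum_Ico_eq_sum_range]
    have h1 : l + 1 - 1 = l := rfl
    rw [h1]
    have h2 : ∀ i ∈ Finset.range l, (((1 + i : ℕ) : ℝ) + 1) ^ k - ((1 + i : ℕ) : ℝ) ^ k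
        = (fun n : ℕ => ((n : ℝ) + 1) ^ k) (i + 1) - (fun n : ℕ => ((n : ℝ) + 1) ^ k) i := by
      intro i _; push_cast; ring
    rw [Finset.sum_congr rfl h2]
    exact (Finset.sum_range_sub (fun n : ℕ => ((n : ℝ) + 1) ^ k) l).trans (by push_cast; ring)
  rw [hswap]
  calc ∑ m ∈ Finset.Icc 1 l,
        ((∑ h ∈ Finset.Icc 2 k, ((k + 1).choose h : ℝ) * (m : ℝ) ^ (k + 1 - h)) + 1)
      ≤ ∑ m ∈ Finset.Icc 1 l, ((k : ℝ) + 1) / 2 * (((m : ℝ) + 1) ^ k - (m : ℝ) ^ k) := by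
        refine Finset.sum_le_sum fun m _ => ?_
        exact key_aux k hk (m : ℝ) (Nat.cast_nonneg m)
    _ = ((k : ℝ) + 1) / 2 * (((l : ℝ) + 1) ^ k - 1) := by
        rw [← Finset.mul_sum, htel]
end
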